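/- (Corollary 2.6, 𝔸¹-connectedness of X through any number of points.) Let P₁, …, P_n be points of ℙ²(𝕜) not lying on the curve Δ_X; represent P_i by a nonzero vector (v₀^i, v₁^i, v₂^i) ∈ 𝕜³ with σ(v₀^i, v₁^i) − (v₂^i)^p ≠ 0. Then there exist polynomials f₀, f₁, f₂ ∈ 𝕜[t], not all constant, with σ(f₀, f₁) − f₂^p = 1, together with parameters t₁, …, t_n ∈ 𝕜 and nonzero scalars λ₁, …, λ_n ∈ 𝕜 such that (f₀(t_i), f₁(t_i), f₂(t_i)) = λ_i·(v₀^i, v₁^i, v₂^i) for each i. In other words, there is an 𝔸¹-curve in X∖Δ_X passing through the n given points. -/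

import Mathlib

open Polynomial Finset

/-- **Corollary 2.6, 𝔸¹-connectedness through any number of points.**
Let `p` be a prime, `𝕜` an algebraically closed field of characteristic `p`, and
`σ(A,B) = ∑_{i=1}^{p-1} σ_i A^i B^{p-i}` with `σ_1 = σ_{p-1} = 1`.  Given points
`P₁, …, P_n ∈ ℙ²(𝕜) ∖ Δ_X`, represented by nonzero vectors `v i` with
`σ(v i 0, v i 1) − (v i 2)^p ≠ 0`, there exist `f₀, f₁, f₂ ∈ 𝕜[t]`, not all constant,
with `σ(f₀, f₁) − f₂^p = 1`, together with parameters `t_i ∈ 𝕜` and nonzero scalars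
`λ_i ∈ 𝕜`, such that `(f₀(t_i), f₁(t_i), f₂(t_i)) = λ_i · v i` for each `i`. -/
theorem A1_curve_through_n_points
    (p : ℕ) (hp : p.Prime) (𝕜 : Type*) [Field 𝕜] [IsAlgClosed 𝕜] [CharP 𝕜 p]
    (s : ℕ → 𝕜) (hs1 : s 1 = 1) (hsp : s (p - 1) = 1)
    (n : ℕ) (v : Fin n → Fin 3 → 𝕜)
    (hv0 : ∀ i, v i ≠ 0)
    (hv : ∀ i, (∑ k ∈ Ioo 0 p, s k * v i 0 ^ k * v i 1 ^ (p - k)) - v i 2 ^ p ≠ 0) :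
    ∃ f₀ f₁ f₂ : Polynomial 𝕜,
      ¬ (f₀.natDegree = 0 ∧ f₁.natDegree = 0 ∧ f₂.natDegree = 0) ∧
      (∑ k ∈ Ioo 0 p, C (s k) * f₀ ^ k * f₁ ^ (p - k)) - f₂ ^ p = 1 ∧
      ∃ (t : Fin n → 𝕜) (lam : Fin n → 𝕜),
        ∀ i, lam i ≠ 0 ∧
          f₀.eval (t i) = lam i * v i 0 ∧
          f₁.eval (t i) = lam i * v i 1 ∧
          f₂.eval (t i) = lam i * v i 2 := by
  classical
  haveI : Fact p.Prime := ⟨hp⟩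
  have hp0 : 0 < p := hp.pos
  -- choose scalars lam with lam i ^ p = (σ(v i) - v i 2 ^ p)⁻¹
  choose lam hlam using fun i =>
    IsAlgClosed.exists_pow_nat_eq
      (((∑ k ∈ Ioo 0 p, s k * v i 0 ^ k * v i 1 ^ (p - k)) - v i 2 ^ p)⁻¹) hp0
  have hlamne : ∀ i, lam i ≠ 0 := by
    intro i h
    apply hv i
    have := hlam i
    rw [h, zero_pow hp0.ne', eq_comm, inv_eq_zero] at this
    exact this
  set w : Fin n → Fin 3 → 𝕜 := fun i j => lam i * v i j with hwdef
  have hw : ∀ i, (∑ k ∈ Ioo 0 p, s k * w i 0 ^ k * w i 1 ^ (p - k)) - w i 2 ^ p = 1 := by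
    intro i
    have hsum : (∑ k ∈ Ioo 0 p, s k * w i 0 ^ k * w i 1 ^ (p - k))
        = lam i ^ p * ∑ k ∈ Ioo 0 p, s k * v i 0 ^ k * v i 1 ^ (p - k) := by
      rw [mul_sum]
      refine sum_congr rfl fun k hk => ?_
      have hkp : k ≤ p := le_of_lt (mem_Ioo.mp hk).2
      have : lam i ^ k * lam i ^ (p - k) = lam i ^ p := by
        rw [← pow_add, Nat.add_sub_cancel' hkp]
      simp only [hwdef, mul_pow]
      rw [← this]
      ring
    have hw2 : w i 2 ^ p = lam i ^ p * v i 2 ^ p := by simp [hwdef, mul_pow]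
    rw [hsum, hw2, ← mul_sub, hlam i]
    exact inv_mul_cancel₀ (hv i)
  -- distinct parameters
  obtain ⟨t, ht⟩ : ∃ t : Fin n → 𝕜, Function.Injective t :=
    ⟨fun i => (Infinite.natEmbedding 𝕜) i, (Infinite.natEmbedding 𝕜).injective.comp
      (fun a b h => Fin.val_injective h)⟩
  set T : Fin n → 𝕜 := fun i => t i ^ p with hTdef
  have hT : Function.Injective T := fun a b h => ht (injective_pow_p 𝕜 p h)
  -- fresh nodes
  obtain ⟨u₁, hu₁⟩ := Infinite.exists_notMem_finset (Finset.image T Finset.univ)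
  obtain ⟨u₂, hu₂⟩ := Infinite.exists_notMem_finset
    (insert u₁ (Finset.image T Finset.univ))
  have hu₂1 : u₂ ≠ u₁ := fun h => hu₂ (by simp [h])
  have hu₁T : ∀ i, u₁ ≠ T i := fun i h => hu₁ (by simp [h])
  have hu₂T : ∀ i, u₂ ≠ T i := fun i h => hu₂ (by simp [h])
  -- interpolation nodes
  set x : Fin n ⊕ Bool → 𝕜 := fun j => Sum.rec T (fun b => if b then u₂ else u₁) j with hxdef
  have hxinj : Function.Injective x := by
    rintro (a | a) (b | b) h
    · exact congrArg Sum.inl (hT h)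
    · exfalso; cases b <;> simp [hxdef] at h
      · exact hu₁T a h.symm
      · exact hu₂T a h.symm
    · exfalso; cases a <;> simp [hxdef] at h
      · exact hu₁T b h
      · exact hu₂T b h
    · cases a <;> cases b <;> simp_all [hxdef]
  have hxInjOn : Set.InjOn x ↑(Finset.univ : Finset (Fin n ⊕ Bool)) := hxinj.injOn
  set r₀ : Fin n ⊕ Bool → 𝕜 := fun j => Sum.rec (fun i => w i 0) (fun b => if b then 1 else 0) j
  set r₁ : Fin n ⊕ Bool → 𝕜 := fun j => Sum.rec (fun i => w i 1) (fun _ => 0) j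
  set F₀ : Polynomial 𝕜 := Lagrange.interpolate Finset.univ x r₀ with hF₀
  set F₁ : Polynomial 𝕜 := Lagrange.interpolate Finset.univ x r₁ with hF₁
  have hF₀T : ∀ i, F₀.eval (T i) = w i 0 := fun i =>
    Lagrange.eval_interpolate_at_node r₀ hxInjOn (Finset.mem_univ (Sum.inl i))
  have hF₁T : ∀ i, F₁.eval (T i) = w i 1 := fun i =>
    Lagrange.eval_interpolate_at_node r₁ hxInjOn (Finset.mem_univ (Sum.inl i))
  have hF₀u₁ : F₀.eval u₁ = 0 :=
    Lagrange.eval_interpolate_at_node r₀ hxInjOn (Finset.mem_univ (Sum.inr false))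
  have hF₀u₂ : F₀.eval u₂ = 1 :=
    Lagrange.eval_interpolate_at_node r₀ hxInjOn (Finset.mem_univ (Sum.inr true))
  -- the curve
  set G : Polynomial 𝕜 := (∑ k ∈ Ioo 0 p, C (s k) * F₀ ^ k * F₁ ^ (p - k)) - 1 with hG
  refine ⟨expand 𝕜 p F₀, expand 𝕜 p F₁, G.map (frobeniusEquiv 𝕜 p).symm, ?_, ?_, t, lam, ?_⟩
  · rintro ⟨h0, -, -⟩
    rw [natDegree_expand, Nat.mul_eq_zero] at h0
    rcases h0 with h0 | h0
    · have : F₀ = C (F₀.coeff 0) := Polynomial.eq_C_of_natDegree_eq_zero h0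
      have h1 : F₀.eval u₁ = F₀.coeff 0 := by rw [this]; simp
      have h2 : F₀.eval u₂ = F₀.coeff 0 := by rw [this]; simp
      rw [hF₀u₁] at h1; rw [hF₀u₂] at h2
      exact one_ne_zero (h2.trans h1.symm)
    · exact hp0.ne' h0
  · have hfp : (G.map (frobeniusEquiv 𝕜 p).symm) ^ p = expand 𝕜 p G :=
      (polynomial_expand_eq 𝕜 p G).symm
    have hsum : (∑ k ∈ Ioo 0 p, C (s k) * (expand 𝕜 p F₀) ^ k * (expand 𝕜 p F₁) ^ (p - k))
        = expand 𝕜 p (∑ k ∈ Ioo 0 p, C (s k) * F₀ ^ k * F₁ ^ (p - k)) := by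
      rw [map_sum]
      refine sum_congr rfl fun k _ => ?_
      rw [map_mul, map_mul, map_pow, map_pow, expand_C]
    rw [hfp, hsum, ← map_sub, hG]
    rw [show (∑ k ∈ Ioo 0 p, C (s k) * F₀ ^ k * F₁ ^ (p - k))
        - ((∑ k ∈ Ioo 0 p, C (s k) * F₀ ^ k * F₁ ^ (p - k)) - 1) = (1 : Polynomial 𝕜) by ring]
    exact map_one (expand 𝕜 p)
  · intro i
    have he₀ : (expand 𝕜 p F₀).eval (t i) = lam i * v i 0 := by
      rw [expand_eval]; exact hF₀T i
    have he₁ : (expand 𝕜 p F₁).eval (t i) = lam i * v i 1 := by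
      rw [expand_eval]; exact hF₁T i
    have he₂ : (G.map (frobeniusEquiv 𝕜 p).symm).eval (t i) = lam i * v i 2 := by
      have hpow : ((G.map (frobeniusEquiv 𝕜 p).symm).eval (t i)) ^ p = (w i 2) ^ p := by
        rw [← eval_pow, ← polynomial_expand_eq, expand_eval, hG]
        have : (∑ k ∈ Ioo 0 p, C (s k) * F₀ ^ k * F₁ ^ (p - k)).eval (T i)
            = ∑ k ∈ Ioo 0 p, s k * w i 0 ^ k * w i 1 ^ (p - k) := by
          rw [eval_finset_sum]
          refine sum_congr rfl fun k _ => ?_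
          rw [eval_mul, eval_mul, eval_C, eval_pow, eval_pow, hF₀T i, hF₁T i]
        rw [eval_sub, this, eval_one]
        linear_combination hw i
      exact injective_pow_p 𝕜 p hpow
    exact ⟨hlamne i, he₀, he₁, he₂⟩
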